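/- Let v0 > 0, let t0 < t1, and let x : [t0, t1] → ℝ² be differentiable with ‖x'(t)‖ ≤ v0 for all t ∈ [t0, t1]. If equality ‖x(t1) − x(t0)‖ = v0·(t1 − t0) holds, then x parametrizes the straight segment affinely: x(t) = x(t0) + ((t − t0)/(t1 − t0))·(x(t1) − x(t0)) for every t ∈ [t0, t1]. -/

import Mathlib

/-- Rigidity in the time-optimal path problem at bounded speed:
if a curve with speed bound `v0` achieves displacement `v0 * (t1 - t0)`,
then it parametrizes the straight segment affinely. -/
theorem bounded_speed_equality_rigidity
    (v0 t0 t1 : ℝ) (hv0 : 0 < v0) (ht : t0 < t1)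
    (x x' : ℝ → EuclideanSpace ℝ (Fin 2))
    (hderiv : ∀ t ∈ Set.Icc t0 t1, HasDerivWithinAt x (x' t) (Set.Icc t0 t1) t)
    (hbound : ∀ t ∈ Set.Icc t0 t1, ‖x' t‖ ≤ v0)
    (heq : ‖x t1 - x t0‖ = v0 * (t1 - t0)) :
    ∀ t ∈ Set.Icc t0 t1,
      x t = x t0 + ((t - t0) / (t1 - t0)) • (x t1 - x t0) := by
  intro t htm
  obtain ⟨ht0, ht1⟩ := htm
  set a := x t - x t0 with ha
  set b := x t1 - x t with hb
  have hab : a + b = x t1 - x t0 := by rw [ha, hb]; abel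
  have h1 : ‖a‖ ≤ v0 * (t - t0) :=
    norm_image_sub_le_of_norm_deriv_le_segment' hderiv
      (fun s hs => hbound s (Set.Ico_subset_Icc_self hs)) t ⟨ht0, ht1⟩
  have hderiv' : ∀ s ∈ Set.Icc t t1, HasDerivWithinAt x (x' s) (Set.Icc t t1) s :=
    fun s hs => (hderiv s ⟨ht0.trans hs.1, hs.2⟩).mono (Set.Icc_subset_Icc ht0 le_rfl)
  have h2 : ‖b‖ ≤ v0 * (t1 - t) :=
    norm_image_sub_le_of_norm_deriv_le_segment' hderiv'
      (fun s hs => hbound s ⟨ht0.trans hs.1, hs.2.le⟩) t1 ⟨ht1, le_rfl⟩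
  have hsum : ‖a + b‖ = v0 * (t1 - t0) := by rw [hab]; exact heq
  have htri : ‖a + b‖ ≤ ‖a‖ + ‖b‖ := norm_add_le _ _
  have hA : ‖a‖ = v0 * (t - t0) := by nlinarith
  have hB : ‖b‖ = v0 * (t1 - t) := by nlinarith
  have heqn : ‖a + b‖ = ‖a‖ + ‖b‖ := by rw [hsum, hA, hB]; ring
  have hray : SameRay ℝ a b := sameRay_iff_norm_add.mpr heqn
  have hns : ‖a‖ • b = ‖b‖ • a := hray.norm_smul_eq
  have key : (v0 * (t - t0)) • (a + b) = (v0 * (t1 - t0)) • a := by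
    rw [smul_add, ← hA, hns, ← add_smul, hA, hB]
    congr 1
    ring
  have hc : v0 * (t1 - t0) ≠ 0 := mul_ne_zero hv0.ne' (sub_pos.mpr ht).ne'
  have h10 : t1 - t0 ≠ 0 := (sub_pos.mpr ht).ne'
  have hcoef : (t - t0) / (t1 - t0) = (v0 * (t1 - t0))⁻¹ * (v0 * (t - t0)) := by
    rw [mul_inv, div_eq_mul_inv]
    field_simp [hv0.ne']
  have hfin : a = ((t - t0) / (t1 - t0)) • (a + b) := by
    rw [hcoef, mul_smul, key, inv_smul_smul₀ hc]
  rw [hab, ha] at hfin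
  exact eq_add_of_sub_eq' hfin
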